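/- Let (Q, 𝒢) be a Riemannian manifold with Levi-Civita connection ∇, and let X be a vector field on Q with associated 1-form α = 𝒢(X, ·). Let H : T*Q → ℝ be the kinetic-energy Hamiltonian H(η) = ½ 𝒢*(η, η). Then for every vector field Y on Q: dα(X, Y) + Y(H ∘ α) = 𝒢(∇_X X, Y). Consequently, the Hamilton–Jacobi equation i_X dα + d(H ∘ α) = 0 holds if and only if X is auto-parallel, ∇_X X = 0. -/
import Mathlib

/-- (Algebraic model of a Riemannian manifold: `R = C^∞(Q)`, `L = 𝔛(Q)`
with its Lie bracket `lb` and action `anchor` on functions, `𝒢` the metric — a symmetric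
nondegenerate `R`-bilinear form — and `∇` the Levi-Civita connection, characterized by
symmetry and metricity.)  For a vector field `X` with associated 1-form `α = 𝒢(X,·)` and
the kinetic Hamiltonian, one has for every `Y`
`dα(X,Y) + Y(H∘α) = 𝒢(∇_X X, Y)`, where `(H∘α) = ½𝒢(X,X)` and
`dα(X,Y) = X(α(Y)) − Y(α(X)) − α([X,Y])`.  Consequently the Hamilton–Jacobi equation
`i_X dα + d(H∘α) = 0` holds iff `X` is auto-parallel: `∇_X X = 0`. -/
theorem HJ_iff_autoparallel
    {R : Type*} [CommRing R] [Algebra ℝ R]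
    {L : Type*} [AddCommGroup L] [Module ℝ L] [Module R L] [IsScalarTower ℝ R L]
    (lb : L → L → L) (anchor : L →ₗ[R] Derivation ℝ R R)
    (hskew : ∀ X Y : L, lb X Y = - lb Y X)
    (hleibniz : ∀ (X Y : L) (f : R), lb X (f • Y) = f • lb X Y + anchor X f • Y)
    -- the Riemannian metric
    (𝒢 : L →ₗ[R] L →ₗ[R] R)
    (hGsymm : ∀ X Y : L, 𝒢 X Y = 𝒢 Y X)
    (hGnondeg : ∀ Z : L, (∀ Y : L, 𝒢 Z Y = 0) → Z = 0)
    -- the Levi-Civita connection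
    (nabla : L → L → L)
    (htorsion : ∀ X Y : L, lb X Y = nabla X Y - nabla Y X)
    (hmetric : ∀ X Y Z : L,
      anchor X (𝒢 Y Z) = 𝒢 (nabla X Y) Z + 𝒢 Y (nabla X Z))
    (X : L) :
    -- the key identity `dα(X,Y) + Y(H ∘ α) = 𝒢(∇_X X, Y)` with `α = 𝒢(X, ·)`
    (∀ Y : L,
      (anchor X (𝒢 X Y) - anchor Y (𝒢 X X) - 𝒢 X (lb X Y))
        + anchor Y ((1/2 : ℝ) • 𝒢 X X)
        = 𝒢 (nabla X X) Y) ∧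
    -- the Hamilton–Jacobi equation holds iff `X` is auto-parallel
    ((∀ Y : L,
      (anchor X (𝒢 X Y) - anchor Y (𝒢 X X) - 𝒢 X (lb X Y))
        + anchor Y ((1/2 : ℝ) • 𝒢 X X) = 0)
      ↔ nabla X X = 0) := by
  have key : ∀ Y : L,
      (anchor X (𝒢 X Y) - anchor Y (𝒢 X X) - 𝒢 X (lb X Y))
        + anchor Y ((1/2 : ℝ) • 𝒢 X X) = 𝒢 (nabla X X) Y := by
    intro Y
    rw [Derivation.map_smul, htorsion X Y, map_sub, hmetric X X Y, hmetric Y X X,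
      hGsymm (nabla Y X) X]
    have h : (1/2 : ℝ) • (𝒢 X (nabla Y X) + 𝒢 X (nabla Y X)) = 𝒢 X (nabla Y X) := by
      rw [← two_smul ℝ, smul_smul]; norm_num
    rw [h]; ring
  refine ⟨key, ?_, ?_⟩
  · intro h
    apply hGnondeg
    intro Y
    rw [← key Y]; exact h Y
  · intro h Y
    rw [key Y, h]; simp
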